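/- Let Q, V ∈ R^{d×k} have orthonormal columns with dist(Q,V) = ‖VVᵀ − QQᵀ‖_op ≤ 1/√2, and let R be a Procrustes rotation minimizing ‖Q − VR‖_F over orthogonal R. Then ‖QᵀV − Rᵀ‖_F ≤ √2 · k^{1/2} · dist(Q,V). -/

import Mathlib

open Matrix

/-- Operator (spectral) norm of a square real matrix. -/
noncomputable def opNorm {d : ℕ} (A : Matrix (Fin d) (Fin d) ℝ) : ℝ :=
  ‖(Matrix.toEuclideanCLM (𝕜 := ℝ) A :
      EuclideanSpace ℝ (Fin d) →L[ℝ] EuclideanSpace ℝ (Fin d))‖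

/-- Subspace distance `dist(Q,V) = ‖VVᵀ − QQᵀ‖_op`. -/
noncomputable def distSub {d k : ℕ} (Q V : Matrix (Fin d) (Fin k) ℝ) : ℝ :=
  opNorm (V * Vᵀ - Q * Qᵀ)

/-- Frobenius norm of a rectangular real matrix. -/
noncomputable def frobNorm {m n : ℕ} (A : Matrix (Fin m) (Fin n) ℝ) : ℝ :=
  Real.sqrt (∑ i, ∑ j, (A i j) ^ 2)

namespace Stmt10Aux

noncomputable def sq2 {m n : ℕ} (A : Matrix (Fin m) (Fin n) ℝ) : ℝ :=
  ∑ i, ∑ j, (A i j) ^ 2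

lemma sq2_nonneg {m n : ℕ} (A : Matrix (Fin m) (Fin n) ℝ) : 0 ≤ sq2 A :=
  Finset.sum_nonneg fun _ _ => Finset.sum_nonneg fun _ _ => sq_nonneg _

lemma frobNorm_eq {m n : ℕ} (A : Matrix (Fin m) (Fin n) ℝ) :
    frobNorm A = Real.sqrt (sq2 A) := rfl

lemma sq2_eq_trace {m n : ℕ} (A : Matrix (Fin m) (Fin n) ℝ) :
    sq2 A = trace (Aᵀ * A) := by
  unfold sq2 Matrix.trace
  rw [Finset.sum_comm]
  apply Finset.sum_congr rfl
  intro j _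
  simp [Matrix.mul_apply, Matrix.diag, sq]

lemma dotProduct_self_nonneg' {n : ℕ} (v : Fin n → ℝ) : 0 ≤ v ⬝ᵥ v :=
  Finset.sum_nonneg fun _ _ => mul_self_nonneg _

lemma dotProduct_self_eq_sum_sq {n : ℕ} (v : Fin n → ℝ) :
    v ⬝ᵥ v = ∑ i, (v i) ^ 2 := by
  simp [dotProduct, sq]

lemma euclid_norm_eq {d : ℕ} (z : Fin d → ℝ) :
    ‖((WithLp.equiv 2 (Fin d → ℝ)).symm z : EuclideanSpace ℝ (Fin d))‖
      = Real.sqrt (z ⬝ᵥ z) := by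
  rw [EuclideanSpace.norm_eq, dotProduct_self_eq_sum_sq]
  congr 1
  apply Finset.sum_congr rfl
  intro i _
  rw [Real.norm_eq_abs, sq_abs]
  rfl

lemma opNorm_mulVec_dp {d : ℕ} (A : Matrix (Fin d) (Fin d) ℝ) (y : Fin d → ℝ) :
    (A *ᵥ y) ⬝ᵥ (A *ᵥ y) ≤ opNorm A ^ 2 * (y ⬝ᵥ y) := by
  have h1 : Real.sqrt ((A *ᵥ y) ⬝ᵥ (A *ᵥ y)) ≤ opNorm A * Real.sqrt (y ⬝ᵥ y) := by
    rw [← euclid_norm_eq, ← euclid_norm_eq,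
      show A *ᵥ y = Matrix.toLin' A y from (Matrix.toLin'_apply A y).symm,
      show (WithLp.equiv 2 (Fin d → ℝ)).symm (Matrix.toLin' A y)
        = Matrix.toEuclideanCLM (𝕜 := ℝ) A ((WithLp.equiv 2 (Fin d → ℝ)).symm y) from rfl]
    exact (Matrix.toEuclideanCLM (𝕜 := ℝ) A).le_opNorm _
  have h2 := pow_le_pow_left₀ (Real.sqrt_nonneg _) h1 2
  rwa [Real.sq_sqrt (dotProduct_self_nonneg' _), mul_pow,
    Real.sq_sqrt (dotProduct_self_nonneg' _)] at h2

lemma dp_mulVec_left {a b : ℕ} (A : Matrix (Fin a) (Fin b) ℝ) (u : Fin a → ℝ)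
    (w : Fin b → ℝ) : u ⬝ᵥ (A *ᵥ w) = (Aᵀ *ᵥ u) ⬝ᵥ w := by
  rw [Matrix.dotProduct_mulVec, Matrix.mulVec_transpose]

lemma dp_mulVec_mulVec {a b : ℕ} (A : Matrix (Fin a) (Fin b) ℝ) (u w : Fin b → ℝ) :
    (A *ᵥ u) ⬝ᵥ (A *ᵥ w) = ((Aᵀ * A) *ᵥ u) ⬝ᵥ w := by
  rw [dp_mulVec_left, Matrix.mulVec_mulVec]

end Stmt10Aux

open Stmt10Aux

/-- If `dist(Q,V) ≤ 1/√2` and `R` is a Procrustes rotation minimizing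
`‖Q − VR'‖_F` over orthogonal `R'`, then `‖QᵀV − Rᵀ‖_F ≤ √2·k^{1/2}·dist(Q,V)`. -/
theorem stmt10 (d k : ℕ) (Q V : Matrix (Fin d) (Fin k) ℝ)
    (hQ : Qᵀ * Q = 1) (hV : Vᵀ * V = 1)
    (hdist : distSub Q V ≤ 1 / Real.sqrt 2)
    (R : Matrix (Fin k) (Fin k) ℝ) (hR : Rᵀ * R = 1)
    (hmin : ∀ R' : Matrix (Fin k) (Fin k) ℝ, R'ᵀ * R' = 1 →
      frobNorm (Q - V * R) ≤ frobNorm (Q - V * R')) :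
    frobNorm (Qᵀ * V - Rᵀ) ≤ Real.sqrt 2 * Real.sqrt k * distSub Q V := by
  classical
  set ε := distSub Q V with hεdef
  have hε0 : 0 ≤ ε := norm_nonneg _
  have hε2 : ε ^ 2 ≤ 1 / 2 := by
    have := pow_le_pow_left₀ hε0 hdist 2
    rwa [div_pow, one_pow, Real.sq_sqrt (by norm_num : (0:ℝ) ≤ 2)] at this
  set M := Qᵀ * V with hMdef
  set H := M * Mᵀ with hHdef
  have hMt : Mᵀ = Vᵀ * Q := by rw [hMdef, transpose_mul, transpose_transpose]
  have hH : H.IsHermitian := by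
    show Hᴴ = H
    ext i j
    simp only [conjTranspose_apply, star_trivial, hHdef, Matrix.mul_apply,
      transpose_apply]
    exact Finset.sum_congr rfl fun l _ => mul_comm _ _
  -- quadratic form bounds
  have key : ∀ x : Fin k → ℝ,
      (1 - ε ^ 2) * (x ⬝ᵥ x) ≤ x ⬝ᵥ (H *ᵥ x) ∧ x ⬝ᵥ (H *ᵥ x) ≤ x ⬝ᵥ x := by
    intro x
    set y := Q *ᵥ x with hy
    set z := Mᵀ *ᵥ x with hz
    have hzy : z = Vᵀ *ᵥ y := by rw [hz, hy, hMt, ← Matrix.mulVec_mulVec]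
    have hxH : x ⬝ᵥ (H *ᵥ x) = z ⬝ᵥ z := by
      rw [hHdef, ← Matrix.mulVec_mulVec, dp_mulVec_left, ← hz]
    have hyy : y ⬝ᵥ y = x ⬝ᵥ x := by
      rw [hy, dp_mulVec_mulVec, hQ, Matrix.one_mulVec]
    have hQQy : (Q * Qᵀ) *ᵥ y = y := by
      rw [hy, Matrix.mulVec_mulVec, Matrix.mul_assoc, hQ, Matrix.mul_one]
    have hVz : (V * Vᵀ) *ᵥ y = V *ᵥ z := by
      rw [hzy, ← Matrix.mulVec_mulVec]
    have hyPy : y ⬝ᵥ ((V * Vᵀ) *ᵥ y) = z ⬝ᵥ z := by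
      rw [hVz, dp_mulVec_left, ← hzy]
    have hPyPy : ((V * Vᵀ) *ᵥ y) ⬝ᵥ ((V * Vᵀ) *ᵥ y) = z ⬝ᵥ z := by
      rw [hVz, dp_mulVec_mulVec, hV, Matrix.one_mulVec]
    set w : Fin d → ℝ := y - (V * Vᵀ) *ᵥ y with hw
    have hww : w ⬝ᵥ w = y ⬝ᵥ y - z ⬝ᵥ z := by
      rw [hw, sub_dotProduct, dotProduct_sub, dotProduct_sub,
        hyPy, hPyPy, dotProduct_comm ((V * Vᵀ) *ᵥ y) y, hyPy]
      ring
    have hwA : w = -((V * Vᵀ - Q * Qᵀ) *ᵥ y) := by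
      rw [Matrix.sub_mulVec, hQQy, hw, neg_sub]
    have hwb : w ⬝ᵥ w ≤ ε ^ 2 * (y ⬝ᵥ y) := by
      rw [hwA, neg_dotProduct, dotProduct_neg, neg_neg]
      exact opNorm_mulVec_dp _ y
    have hw0 : 0 ≤ w ⬝ᵥ w := dotProduct_self_nonneg' w
    rw [hyy] at hww hwb
    constructor
    · rw [hxH]; nlinarith
    · rw [hxH]; nlinarith
  -- eigenvalues
  set ev := hH.eigenvalues with hevdef
  have hev_eq : ∀ i, ev i =
      (⇑(hH.eigenvectorBasis i)) ⬝ᵥ (H *ᵥ ⇑(hH.eigenvectorBasis i)) := by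
    intro i
    have h := hH.eigenvalues_eq i
    simpa using h
  have hunit : ∀ i, (⇑(hH.eigenvectorBasis i)) ⬝ᵥ (⇑(hH.eigenvectorBasis i)) = 1 := by
    intro i
    have h := hH.eigenvectorBasis.orthonormal.1 i
    have h2 : (inner ℝ (hH.eigenvectorBasis i) (hH.eigenvectorBasis i) : ℝ) = 1 := by
      rw [real_inner_self_eq_norm_mul_norm, h, one_mul]
    rw [← h2, PiLp.inner_apply]
    simp [dotProduct, sq]
  have hev_le : ∀ i, ev i ≤ 1 := by
    intro i
    have := (key (⇑(hH.eigenvectorBasis i))).2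
    rw [hunit i] at this
    rw [hev_eq i]; exact this
  have hev_ge : ∀ i, 1 - ε ^ 2 ≤ ev i := by
    intro i
    have := (key (⇑(hH.eigenvectorBasis i))).1
    rw [hunit i, mul_one] at this
    rw [hev_eq i]; exact this
  have hev_pos : ∀ i, 0 < ev i := fun i => by have := hev_ge i; linarith
  have hsq : ∀ i, Real.sqrt (ev i) * Real.sqrt (ev i) = ev i :=
    fun i => Real.mul_self_sqrt (hev_pos i).le
  have hsne : ∀ i, Real.sqrt (ev i) ≠ 0 :=
    fun i => ne_of_gt (Real.sqrt_pos.mpr (hev_pos i))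
  -- spectral theorem
  set Umat := (Matrix.IsHermitian.eigenvectorUnitary hH : Matrix (Fin k) (Fin k) ℝ)
    with hUdef
  have hU1 : star Umat * Umat = 1 :=
    Matrix.mem_unitaryGroup_iff'.mp (Matrix.IsHermitian.eigenvectorUnitary hH).2
  have hU2 : Umat * star Umat = 1 :=
    Matrix.mem_unitaryGroup_iff.mp (Matrix.IsHermitian.eigenvectorUnitary hH).2
  have hspec : H = Umat * diagonal ev * star Umat := by
    have h := hH.spectral_theorem
    simpa using h
  have hcancel : ∀ X : Matrix (Fin k) (Fin k) ℝ, star Umat * (Umat * X) = X := by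
    intro X; rw [← Matrix.mul_assoc, hU1, Matrix.one_mul]
  set g : Fin k → ℝ := fun i => (Real.sqrt (ev i))⁻¹ with hgdef
  have hgdg : ∀ X : Matrix (Fin k) (Fin k) ℝ,
      diagonal g * (diagonal ev * (diagonal g * X)) = X := by
    intro X
    rw [← Matrix.mul_assoc (diagonal ev), ← Matrix.mul_assoc (diagonal g),
      diagonal_mul_diagonal, diagonal_mul_diagonal]
    have h1 : (fun i => g i * (ev i * g i)) = fun _ => (1:ℝ) := by
      funext i
      show (Real.sqrt (ev i))⁻¹ * (ev i * (Real.sqrt (ev i))⁻¹) = 1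
      rw [← hsq i]
      field_simp
      rw [Real.sqrt_sq (Real.sqrt_nonneg _)]
      exact div_self (pow_ne_zero 2 (hsne i))
    rw [h1]
    simp
  set N := Umat * (diagonal g * star Umat) with hNdef
  set R' := Mᵀ * N with hR'def
  have hMN : M * R' = H * N := by
    rw [hR'def, ← Matrix.mul_assoc M Mᵀ N, ← hHdef]
  have hHN : H * N = Umat * (diagonal ev * (diagonal g * star Umat)) := by
    rw [hspec, hNdef]
    simp only [Matrix.mul_assoc, hcancel]
  have hNHN : N * (H * N) = 1 := by
    rw [hHN, hNdef]
    simp only [Matrix.mul_assoc, hcancel, hgdg]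
    exact hU2
  have hstarU : star Umat = Umatᵀ := by
    rw [Matrix.star_eq_conjTranspose, conjTranspose_eq_transpose_of_trivial]
  have hNsymm : Nᵀ = N := by
    rw [hNdef, hstarU, transpose_mul, transpose_mul, transpose_transpose,
      diagonal_transpose, Matrix.mul_assoc]
  have hR'o : R'ᵀ * R' = 1 := by
    rw [hR'def, transpose_mul, transpose_transpose, hNsymm, Matrix.mul_assoc,
      ← Matrix.mul_assoc M Mᵀ N, ← hHdef]
    exact hNHN
  -- trace of M * R'
  have htrMR' : trace (M * R') = ∑ i, Real.sqrt (ev i) := by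
    rw [hMN, hHN, Matrix.trace_mul_comm]
    simp only [Matrix.mul_assoc]
    rw [hU1, Matrix.mul_one, diagonal_mul_diagonal, Matrix.trace_diagonal]
    apply Finset.sum_congr rfl
    intro i _
    show ev i * (Real.sqrt (ev i))⁻¹ = Real.sqrt (ev i)
    rw [← hsq i]
    field_simp
    rw [Real.sqrt_sq (Real.sqrt_nonneg _), sq, mul_div_assoc, div_self (hsne i), mul_one]
  -- trace of H
  have htrH : trace H = ∑ i, ev i := by
    rw [hspec, Matrix.trace_mul_comm, ← Matrix.mul_assoc, hU1, Matrix.one_mul,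
      Matrix.trace_diagonal]
  -- expansion of the Procrustes objective
  have hexp : ∀ R₀ : Matrix (Fin k) (Fin k) ℝ, R₀ᵀ * R₀ = 1 →
      sq2 (Q - V * R₀) = 2 * (k : ℝ) - 2 * trace (M * R₀) := by
    intro R₀ h0
    rw [sq2_eq_trace]
    have e1 : Qᵀ * (V * R₀) = M * R₀ := by rw [← Matrix.mul_assoc, ← hMdef]
    have e2 : (V * R₀)ᵀ * Q = (M * R₀)ᵀ := by
      rw [transpose_mul V R₀, transpose_mul M R₀, hMt, Matrix.mul_assoc]
    have e3 : (V * R₀)ᵀ * (V * R₀) = 1 := by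
      rw [transpose_mul, Matrix.mul_assoc, ← Matrix.mul_assoc Vᵀ V R₀, hV,
        Matrix.one_mul, h0]
    have e : (Q - V * R₀)ᵀ * (Q - V * R₀)
        = (1 : Matrix (Fin k) (Fin k) ℝ) - M * R₀ - (M * R₀)ᵀ + 1 := by
      rw [transpose_sub, Matrix.sub_mul, Matrix.mul_sub, Matrix.mul_sub,
        hQ, e1, e2, e3]
      abel
    rw [e, Matrix.trace_add, Matrix.trace_sub, Matrix.trace_sub,
      Matrix.trace_one, Matrix.trace_transpose]
    simp [Fintype.card_fin]
    ring
  have hexp2 : sq2 (M - Rᵀ) = trace H - 2 * trace (M * R) + (k : ℝ) := by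
    rw [sq2_eq_trace]
    have e1 : Mᵀ * Rᵀ = (R * M)ᵀ := (transpose_mul R M).symm
    have e2 : R * Rᵀ = 1 := mul_eq_one_comm.mp hR
    have e : (M - Rᵀ)ᵀ * (M - Rᵀ)
        = Mᵀ * M - (R * M)ᵀ - R * M + 1 := by
      rw [transpose_sub, transpose_transpose, Matrix.sub_mul, Matrix.mul_sub,
        Matrix.mul_sub, e1, e2]
      abel
    rw [e, Matrix.trace_add, Matrix.trace_sub, Matrix.trace_sub,
      Matrix.trace_one, Matrix.trace_transpose,
      Matrix.trace_mul_comm Mᵀ M, ← hHdef, Matrix.trace_mul_comm R M]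
    simp [Fintype.card_fin]
    ring
  -- use minimality
  have hm := hmin R' hR'o
  rw [frobNorm_eq, frobNorm_eq] at hm
  have hms : sq2 (Q - V * R) ≤ sq2 (Q - V * R') := by
    have h2 := pow_le_pow_left₀ (Real.sqrt_nonneg _) hm 2
    rwa [Real.sq_sqrt (sq2_nonneg _), Real.sq_sqrt (sq2_nonneg _)] at h2
  rw [hexp R hR, hexp R' hR'o, htrMR'] at hms
  have htMR : (∑ i, Real.sqrt (ev i)) ≤ trace (M * R) := by linarith
  -- final bound on sq2 (M - Rᵀ)
  have hsum : sq2 (M - Rᵀ) ≤ (k : ℝ) * ε ^ 2 := by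
    rw [hexp2]
    have step1 : trace H - 2 * trace (M * R) + (k : ℝ)
        ≤ (∑ i, ev i) - 2 * (∑ i, Real.sqrt (ev i)) + (k : ℝ) := by
      rw [htrH]; linarith
    have step2 : (∑ i, ev i) - 2 * (∑ i, Real.sqrt (ev i)) + (k : ℝ)
        = ∑ i : Fin k, (ev i - 2 * Real.sqrt (ev i) + 1) := by
      rw [Finset.sum_add_distrib, Finset.sum_sub_distrib, ← Finset.mul_sum]
      simp [Fintype.card_fin]
    have step3 : (∑ i : Fin k, (ev i - 2 * Real.sqrt (ev i) + 1))
        ≤ ∑ _i : Fin k, ε ^ 2 := by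
      apply Finset.sum_le_sum
      intro i _
      nlinarith [hsq i, hev_le i, hev_ge i, Real.sqrt_nonneg (ev i)]
    have step4 : (∑ _i : Fin k, ε ^ 2) = (k : ℝ) * ε ^ 2 := by
      simp [Finset.sum_const, Fintype.card_fin]
    have step23 : (∑ i, ev i) - 2 * (∑ i, Real.sqrt (ev i)) + (k : ℝ)
        ≤ (k : ℝ) * ε ^ 2 := by
      rw [step2, ← step4]; exact step3
    exact le_trans step1 step23
  -- conclude
  rw [frobNorm_eq]
  have hfin : Real.sqrt (sq2 (M - Rᵀ)) ≤ Real.sqrt ((k : ℝ) * ε ^ 2) :=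
    Real.sqrt_le_sqrt hsum
  have heq : Real.sqrt ((k : ℝ) * ε ^ 2) = Real.sqrt (k : ℝ) * ε := by
    rw [Real.sqrt_mul (Nat.cast_nonneg k), Real.sqrt_sq hε0]
  have h12 : (1 : ℝ) ≤ Real.sqrt 2 := by
    rw [show (1:ℝ) = Real.sqrt 1 by simp]
    exact Real.sqrt_le_sqrt (by norm_num)
  have h2 : 0 ≤ Real.sqrt (k : ℝ) * ε := mul_nonneg (Real.sqrt_nonneg _) hε0
  calc Real.sqrt (sq2 (M - Rᵀ)) ≤ Real.sqrt (k : ℝ) * ε := heq ▸ hfin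
    _ ≤ Real.sqrt 2 * (Real.sqrt (k : ℝ) * ε) := le_mul_of_one_le_left h2 h12
    _ = Real.sqrt 2 * Real.sqrt (k : ℝ) * ε := by ring
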